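/- Let Γ be a countable group acting freely on a measure space (X, μ) by measurable, measure-preserving bijections, let F be a measurable strict fundamental domain with μ(F) < ∞, χ : X → Γ its measurable retract, and let Λ be a group acting on X on the right by measurable bijections commuting with the Γ-action. For bounded c : Γ^{m} → ℝ define Tc : Λ^{m} → ℝ by Tc(λ₀,…,λ_{m−1}) = ∫_F c(χ(x·λ₀),…,χ(x·λ_{m−1})) dμ(x). Then: (1) |Tc(λ₀,…,λ_{m−1})| ≤ μ(F) · sup|c| for all tuples; and (2) T commutes with the homogeneous codifferential: T(δc) = δ(Tc) for every bounded c : Γ^m → ℝ, m ≥ 1. -/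

import Mathlib

open MeasureTheory

/-- The homogeneous codifferential on real-valued cochains:
`δc(g₀,…,g_m) = Σᵢ (−1)^i c(g₀,…,ĝᵢ,…,g_m)`. -/
def delta {G : Type*} {m : ℕ} (c : (Fin m → G) → ℝ) : (Fin (m + 1) → G) → ℝ :=
  fun f => ∑ i : Fin (m + 1), (-1 : ℝ) ^ (i : ℕ) * c (f ∘ i.succAbove)

/-- The transfer cochain `Tc(λ₀,…,λ_{m−1}) = ∫_F c(χ(x·λ₀),…,χ(x·λ_{m−1})) dμ(x)`. -/
noncomputable def transfer {Γ Λ X : Type*} [MeasurableSpace X] (μ : Measure X)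
    (F : Set X) (χ : X → Γ) (act : X → Λ → X) {m : ℕ}
    (c : (Fin m → Γ) → ℝ) : (Fin m → Λ) → ℝ :=
  fun f => ∫ x in F, c (fun j => χ (act x (f j))) ∂μ

/-- (1) the transfer cochain of a bounded cochain satisfies
`|Tc(λ₀,…,λ_{m−1})| ≤ μ(F) · sup|c|`, and (2) the transfer commutes with the
homogeneous codifferential: `T(δc) = δ(Tc)` (here `m = n + 1 ≥ 1`). -/
theorem stmt11 {Γ Λ X : Type*} [Group Γ] [Countable Γ]
    [MeasurableSpace Γ] [MeasurableSingletonClass Γ]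
    [Group Λ] [MulAction Γ X] [MeasurableSpace X] (μ : Measure X)
    (hΓmeas : ∀ γ : Γ, Measurable fun x : X => γ • x)
    (hΓpres : ∀ γ : Γ, MeasurePreserving (fun x : X => γ • x) μ μ)
    (hfree : ∀ (γ : Γ) (x : X), γ • x = x → γ = 1)
    (F : Set X) (hFmeas : MeasurableSet F) (hFfin : μ F < ⊤)
    (hF : ∀ x : X, ∃! y : X, y ∈ F ∧ ∃ γ : Γ, γ • x = y)
    (χ : X → Γ) (hχmeas : Measurable χ)
    (hχeq : ∀ (γ : Γ) (x : X), χ (γ • x) = γ * χ x) (hχF : ∀ y ∈ F, χ y = 1)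
    (act : X → Λ → X)
    (h_one : ∀ x : X, act x 1 = x)
    (h_mul : ∀ (x : X) (l m : Λ), act x (l * m) = act (act x l) m)
    (hactmeas : ∀ l : Λ, Measurable fun x : X => act x l)
    (hcomm : ∀ (γ : Γ) (x : X) (l : Λ), act (γ • x) l = γ • act x l)
    (n : ℕ) (c : (Fin (n + 1) → Γ) → ℝ)
    (hcbdd : BddAbove (Set.range fun f : Fin (n + 1) → Γ => |c f|)) :
    (∀ f : Fin (n + 1) → Λ,
      |transfer μ F χ act c f| ≤ (μ F).toReal * ⨆ f' : Fin (n + 1) → Γ, |c f'|) ∧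
    transfer μ F χ act (delta c) = delta (transfer μ F χ act c) := by
  have hsup : ∀ g : Fin (n+1) → Γ, |c g| ≤ ⨆ f' : Fin (n + 1) → Γ, |c f'| :=
    fun g => le_ciSup hcbdd g
  have hmeas : ∀ f : Fin (n+1) → Λ,
      Measurable fun x : X => c (fun j => χ (act x (f j))) := fun f =>
    (measurable_of_countable c).comp
      (measurable_pi_lambda _ fun j => hχmeas.comp (hactmeas (f j)))
  have hint : ∀ f : Fin (n+1) → Λ,
      IntegrableOn (fun x => c (fun j => χ (act x (f j)))) F μ := by
    intro f
    refine Integrable.mono' ((integrableOn_const_iff (C := ⨆ f' : Fin (n + 1) → Γ, |c f'|)).2 (Or.inr hFfin))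
      (hmeas f).aestronglyMeasurable ?_
    filter_upwards with x
    simpa using hsup _
  constructor
  · intro f
    have := norm_setIntegral_le_of_norm_le_const (f := fun x => c (fun j => χ (act x (f j))))
      hFfin (fun x _ => by simpa using hsup (fun j => χ (act x (f j))))
    simpa [transfer, Real.norm_eq_abs, mul_comm, measureReal_def] using this
  · funext f
    have h1 : transfer μ F χ act (delta c) f
        = ∫ x in F, ∑ i : Fin (n+2),
            (-1:ℝ)^(i:ℕ) * c (fun j => χ (act x ((f ∘ i.succAbove) j))) ∂μ := rfl
    rw [h1, integral_finset_sum _ (fun i _ => ((hint (f ∘ i.succAbove)).const_mul _))]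
    simp only [delta, transfer]
    exact Finset.sum_congr rfl fun i _ => by rw [integral_const_mul]
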